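/- The spin-wave free energy F(ŵ) = (1/2) ∫_{[-π,π]²} log D̂_k(ŵ) dk/(2π)², where D̂_k(ŵ) = ŵ_z² |1-e^{ik₁}|² + ŵ_x² |1-e^{ik₂}|² and ŵ = (ŵ_x, 0, ŵ_z) is a unit vector in the xz-plane, is minimized over such unit vectors only by ŵ = ±ê_x and ŵ = ±ê_z. -/

import Mathlib

/-- The spin-wave free energy of the 2D orbital-compass model for a direction
`ŵ = (ŵ_x, 0, ŵ_z)` in the `xz`-plane:
`F(ŵ) = (1/2) ∫_{[-π,π]²} log D̂_k(ŵ) dk/(2π)²` where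
`D̂_k(ŵ) = ŵ_z²|1-e^{ik₁}|² + ŵ_x²|1-e^{ik₂}|²`. -/
noncomputable def spinWaveF (wx wz : ℝ) : ℝ :=
  (1 / 2) * (1 / (2 * Real.pi) ^ 2) *
    ∫ k1 in (-Real.pi)..Real.pi, ∫ k2 in (-Real.pi)..Real.pi,
      Real.log (wz ^ 2 * ‖1 - Complex.exp (Complex.I * (k1 : ℂ))‖ ^ 2
        + wx ^ 2 * ‖1 - Complex.exp (Complex.I * (k2 : ℂ))‖ ^ 2)

open Real MeasureTheory intervalIntegral Set

noncomputable def gOC (k : ℝ) : ℝ := 2 - 2 * Real.cos k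

lemma gOC_eq (k : ℝ) :
    ‖1 - Complex.exp (Complex.I * (k : ℂ))‖ ^ 2 = gOC k := by
  rw [Complex.sq_norm, mul_comm, Complex.exp_mul_I]
  have : (1 : ℂ) - (Complex.cos k + Complex.sin k * Complex.I)
      = ((1 - Real.cos k : ℝ) : ℂ) + ((-Real.sin k : ℝ) : ℂ) * Complex.I := by
    push_cast; ring
  rw [this, Complex.normSq_add_mul_I, gOC]
  have := Real.sin_sq_add_cos_sq k
  ring_nf
  nlinarith [Real.sin_sq_add_cos_sq k]

lemma gOC_nonneg (k : ℝ) : 0 ≤ gOC k := by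
  have := Real.cos_le_one k; unfold gOC; linarith

lemma gOC_le_four (k : ℝ) : gOC k ≤ 4 := by
  have := Real.neg_one_le_cos k; unfold gOC; linarith

lemma gOC_lower {k : ℝ} (hk : |k| ≤ π) : 4 / π ^ 2 * k ^ 2 ≤ gOC k := by
  have := Real.cos_le_one_sub_mul_cos_sq hk
  have h2 : 4 / π ^ 2 * k ^ 2 = 2 * (2 / π ^ 2 * k ^ 2) := by ring
  unfold gOC; linarith

lemma gOC_upper (k : ℝ) : gOC k ≤ k ^ 2 := by
  have := Real.one_sub_sq_div_two_le_cos (x := k)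
  unfold gOC; nlinarith

lemma gOC_pos {k : ℝ} (hk : |k| ≤ π) (h0 : k ≠ 0) : 0 < gOC k := by
  have h1 : (0:ℝ) < 4 / π ^ 2 * k ^ 2 := by
    have := Real.pi_pos; positivity
  linarith [gOC_lower hk]

lemma abs_log_le {x : ℝ} (hx : 0 < x) (hπ : x ≤ π) :
    |Real.log x| ≤ 2 * x ^ (-(1/2) : ℝ) + 2 := by
  have hr : (0:ℝ) ≤ x ^ (-(1/2) : ℝ) := Real.rpow_nonneg hx.le _
  rcases le_or_gt 1 x with h1 | h1
  · rw [abs_of_nonneg (Real.log_nonneg h1)]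
    have h2 : Real.log x ≤ Real.log π := Real.log_le_log hx hπ
    have h3 : Real.log π < 2 := by
      have he : Real.exp 1 > 2.7182818283 := Real.exp_one_gt_d9
      have hp : π < 3.15 := by linarith [Real.pi_lt_d2]
      have : π < Real.exp 2 := by
        have : Real.exp 2 = Real.exp 1 * Real.exp 1 := by
          rw [← Real.exp_add]; norm_num
        nlinarith
      calc Real.log π < Real.log (Real.exp 2) :=
            Real.log_lt_log Real.pi_pos this
        _ = 2 := Real.log_exp 2
    linarith
  · rw [abs_of_nonpos (Real.log_nonpos hx.le h1.le)]
    have h2 : -Real.log x = 2 * Real.log (x ^ (-(1/2) : ℝ)) := by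
      rw [Real.log_rpow hx]; ring
    have h3 : Real.log (x ^ (-(1/2) : ℝ)) ≤ x ^ (-(1/2) : ℝ) := by
      have h4 := Real.log_le_sub_one_of_pos (Real.rpow_pos_of_pos hx (-(1/2) : ℝ))
      linarith
    linarith

lemma abs_log_gOC_le {k : ℝ} (hk : |k| ≤ π) (h0 : k ≠ 0) :
    |Real.log (gOC k)| ≤ 4 * |k| ^ (-(1/2) : ℝ) + 7 := by
  have hka : (0:ℝ) < |k| := abs_pos.mpr h0
  have hg : 0 < gOC k := gOC_pos hk h0
  have hk2 : (0:ℝ) < k ^ 2 := by positivity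
  have hsq : k ^ 2 = |k| ^ 2 := (sq_abs k).symm
  have hub : Real.log (gOC k) ≤ 2 * Real.log |k| := by
    calc Real.log (gOC k) ≤ Real.log (k ^ 2) := Real.log_le_log hg (gOC_upper k)
      _ = 2 * Real.log |k| := by rw [hsq, Real.log_pow]; norm_num
  have hc : (0:ℝ) < 4 / π ^ 2 := by have := Real.pi_pos; positivity
  have hlb : Real.log (4 / π ^ 2) + 2 * Real.log |k| ≤ Real.log (gOC k) := by
    have h1 : Real.log (4 / π ^ 2 * k ^ 2) ≤ Real.log (gOC k) :=
      Real.log_le_log (by positivity) (gOC_lower hk)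
    have h2 : Real.log (4 / π ^ 2 * k ^ 2)
        = Real.log (4 / π ^ 2) + 2 * Real.log |k| := by
      rw [Real.log_mul hc.ne' hk2.ne', hsq, Real.log_pow]; norm_num
    linarith
  have hcb : -3 ≤ Real.log (4 / π ^ 2) := by
    have h4 : (1:ℝ)/4 ≤ 4 / π ^ 2 := by
      have hp : π ^ 2 ≤ 16 := by nlinarith [Real.pi_lt_d2, Real.pi_pos]
      rw [div_le_div_iff₀ (by norm_num) (by positivity)]
      nlinarith [Real.pi_pos]
    have := Real.log_le_log (by norm_num : (0:ℝ) < 1/4) h4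
    have h5 : Real.log (1/4) = - Real.log 4 := by
      rw [one_div, Real.log_inv]
    have := Real.log_le_sub_one_of_pos (by norm_num : (0:ℝ) < 4)
    linarith
  have hcub : Real.log (4 / π ^ 2) ≤ 0 := by
    apply Real.log_nonpos hc.le
    rw [div_le_one (by positivity)]
    nlinarith [Real.pi_gt_three]
  have hal := abs_log_le hka hk
  rw [abs_le] at hal ⊢
  constructor <;> nlinarith [hal.1, hal.2]

lemma intInt_B (a b : ℝ) :
    IntervalIntegrable (fun k => 4 * |k| ^ (-(1/2) : ℝ) + 7) volume a b := by
  have hmeas : ∀ c d : ℝ, AEStronglyMeasurable (fun k : ℝ => |k| ^ (-(1/2) : ℝ))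
      (volume.restrict (Set.uIoc c d)) :=
    fun c d => ((measurable_abs.pow_const _).aestronglyMeasurable)
  have key : ∀ t : ℝ, 0 ≤ t →
      IntervalIntegrable (fun k : ℝ => |k| ^ (-(1/2) : ℝ)) volume 0 t := by
    intro t ht
    have h0 : IntervalIntegrable (fun x : ℝ => x ^ (-(1/2) : ℝ)) volume 0 t :=
      intervalIntegrable_rpow' (by norm_num)
    apply h0.mono_fun' (hmeas 0 t)
    rw [Set.uIoc_of_le ht]
    refine (ae_restrict_iff' measurableSet_Ioc).mpr (ae_of_all _ ?_)
    intro k hk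
    simp only [Real.norm_eq_abs]
    rw [abs_of_pos hk.1, abs_of_nonneg (Real.rpow_nonneg hk.1.le _)]
  have keyneg : ∀ t : ℝ, 0 ≤ t →
      IntervalIntegrable (fun k : ℝ => |k| ^ (-(1/2) : ℝ)) volume (-t) 0 := by
    intro t ht
    have := ((IntervalIntegrable.iff_comp_neg (by simp)).mp ((key t ht).symm))
    simp only [abs_neg, neg_zero] at this
    exact this
  set M : ℝ := |a| + |b| with hM
  have hM0 : 0 ≤ M := by positivity
  have hfull : IntervalIntegrable (fun k : ℝ => |k| ^ (-(1/2) : ℝ)) volume (-M) M :=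
    (keyneg M hM0).trans (key M hM0)
  have hsub : Set.uIcc a b ⊆ Set.uIcc (-M) M := by
    apply Set.uIcc_subset_uIcc <;> rw [Set.mem_uIcc] <;> left <;>
      constructor <;> cases abs_cases a <;> cases abs_cases b <;> linarith
  have := (hfull.mono_set hsub).const_mul 4
  exact this.add intervalIntegrable_const

lemma continuous_gOC : Continuous gOC := by
  unfold gOC; fun_prop

lemma ae_ne_zero : ∀ᵐ k : ℝ, k ≠ (0:ℝ) := by
  rw [ae_iff]
  simp only [ne_eq, not_not, Set.setOf_eq_eq_singleton]
  exact Real.volume_singleton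

lemma intInt_log_gOC {a b : ℝ} (hab : Set.uIcc a b ⊆ Set.Icc (-π) π) :
    IntervalIntegrable (fun k => Real.log (gOC k)) volume a b := by
  apply (intInt_B a b).mono_fun'
    ((Real.measurable_log.comp continuous_gOC.measurable).aestronglyMeasurable)
  filter_upwards [ae_restrict_of_ae ae_ne_zero,
    ae_restrict_mem measurableSet_uIoc] with k hk0 hkmem
  have hk : |k| ≤ π := by
    have := hab (Set.uIoc_subset_uIcc hkmem)
    rw [Set.mem_Icc] at this
    exact abs_le.mpr this
  simpa [Real.norm_eq_abs] using abs_log_gOC_le hk hk0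

noncomputable def COC : ℝ := ∫ k in (-π)..π, Real.log (gOC k)

lemma uIcc_sub {a b : ℝ} (ha : a ∈ Set.Icc (-π) π) (hb : b ∈ Set.Icc (-π) π) :
    Set.uIcc a b ⊆ Set.Icc (-π) π :=
  Set.uIcc_subset_Icc ha hb

lemma pi_mem : π ∈ Set.Icc (-π) π := by
  constructor <;> linarith [Real.pi_pos]
lemma neg_pi_mem : -π ∈ Set.Icc (-π) π := by
  constructor <;> linarith [Real.pi_pos]
lemma zero_mem : (0:ℝ) ∈ Set.Icc (-π) π := by
  constructor <;> linarith [Real.pi_pos]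
lemma half_pi_mem : π/2 ∈ Set.Icc (-π) π := by
  constructor <;> linarith [Real.pi_pos]

lemma log_concave_ineq {x y u v : ℝ} (hx : 0 < x) (hy : 0 < y)
    (hu : 0 ≤ u) (hv : 0 ≤ v) (huv : v + u = 1) :
    v * Real.log x + u * Real.log y ≤ Real.log (v * x + u * y) := by
  have := (strictConcaveOn_log_Ioi.concaveOn).2 (Set.mem_Ioi.mpr hx)
    (Set.mem_Ioi.mpr hy) hv hu huv
  simpa [smul_eq_mul] using this

lemma log_concave_strict {x y u v : ℝ} (hx : 0 < x) (hy : 0 < y) (hxy : x ≠ y)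
    (hu : 0 < u) (hv : 0 < v) (huv : v + u = 1) :
    v * Real.log x + u * Real.log y < Real.log (v * x + u * y) := by
  have := strictConcaveOn_log_Ioi.2 (Set.mem_Ioi.mpr hx)
    (Set.mem_Ioi.mpr hy) hxy hv hu huv
  simpa [smul_eq_mul] using this

noncomputable def innerF (v u k1 : ℝ) : ℝ :=
  ∫ k2 in (-π)..π, Real.log (v * gOC k1 + u * gOC k2)

lemma mem_uIcc_pi {x : ℝ} (hx : x ∈ Set.Icc (-π) π) : x ∈ Set.uIcc (-π) π := by
  rwa [Set.uIcc_of_le (by linarith [Real.pi_pos])]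

lemma cont_inner {c u : ℝ} (hc : 0 < c) (hu : 0 ≤ u) :
    Continuous (fun k2 => Real.log (c + u * gOC k2)) := by
  apply (continuous_const.add (continuous_const.mul continuous_gOC)).log
  intro x
  have := gOC_nonneg x
  exact (show 0 < c + u * gOC x by nlinarith [mul_nonneg hu this]).ne'

lemma rhs_intInt {u v : ℝ} (L1 : ℝ) :
    IntervalIntegrable (fun k2 => v * L1 + u * Real.log (gOC k2)) volume (-π) π :=
  intervalIntegrable_const.add
    ((intInt_log_gOC (uIcc_sub neg_pi_mem pi_mem)).const_mul u)

lemma rhs_integral {u v : ℝ} (L1 : ℝ) :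
    ∫ k2 in (-π)..π, (v * L1 + u * Real.log (gOC k2))
      = 2*π*(v * L1) + u * COC := by
  rw [intervalIntegral.integral_add intervalIntegrable_const
    ((intInt_log_gOC (uIcc_sub neg_pi_mem pi_mem)).const_mul u),
    intervalIntegral.integral_const, intervalIntegral.integral_const_mul]
  rw [smul_eq_mul, COC]
  ring

lemma inner_ge {u v : ℝ} (hu : 0 < u) (hv : 0 < v) (huv : u + v = 1) {k1 : ℝ}
    (hk1 : |k1| ≤ π) (h0 : k1 ≠ 0) :
    2*π*(v * Real.log (gOC k1)) + u * COC ≤ innerF v u k1 := by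
  have hg1 : 0 < gOC k1 := gOC_pos hk1 h0
  have hc : 0 < v * gOC k1 := by positivity
  have hInt1 := rhs_intInt (u := u) (v := v) (Real.log (gOC k1))
  have hInt2 : IntervalIntegrable
      (fun k2 => Real.log (v * gOC k1 + u * gOC k2)) volume (-π) π :=
    (cont_inner hc hu.le).intervalIntegrable _ _
  have hmono := intervalIntegral.integral_mono_ae_restrict
    (by linarith [Real.pi_pos] : -π ≤ π) hInt1 hInt2 ?_
  · rw [rhs_integral] at hmono
    exact hmono
  · filter_upwards [ae_restrict_of_ae ae_ne_zero,
      ae_restrict_mem measurableSet_Icc] with k2 hk20 hk2m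
    have hg2 : 0 < gOC k2 := gOC_pos (abs_le.mpr ⟨hk2m.1, hk2m.2⟩) hk20
    exact log_concave_ineq hg1 hg2 hu.le hv.le (by linarith)

lemma inner_gt {u v : ℝ} (hu : 0 < u) (hv : 0 < v) (huv : u + v = 1) {k1 : ℝ}
    (hk1 : k1 ∈ Set.Ioo (π/2) π) :
    2*π*(v * Real.log (gOC k1)) + u * COC < innerF v u k1 := by
  have hpi := Real.pi_pos
  have hk1' : |k1| ≤ π := abs_le.mpr ⟨by linarith [hk1.1], hk1.2.le⟩
  have h0 : k1 ≠ 0 := by intro hh; rw [hh] at hk1; linarith [hk1.1]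
  have hg1 : 0 < gOC k1 := gOC_pos hk1' h0
  have hg1gt : 2 < gOC k1 := by
    have := Real.cos_lt_cos_of_nonneg_of_le_pi (by positivity) hk1.2.le hk1.1
    rw [Real.cos_pi_div_two] at this
    unfold gOC; linarith
  have hc : 0 < v * gOC k1 := by positivity
  have hInt1 := rhs_intInt (u := u) (v := v) (Real.log (gOC k1))
  have hInt2 : IntervalIntegrable
      (fun k2 => Real.log (v * gOC k1 + u * gOC k2)) volume (-π) π :=
    (cont_inner hc hu.le).intervalIntegrable _ _
  set φ : ℝ → ℝ := fun k2 => Real.log (v * gOC k1 + u * gOC k2)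
    - (v * Real.log (gOC k1) + u * Real.log (gOC k2)) with hφ
  have hφint : IntervalIntegrable φ volume (-π) π := hInt2.sub hInt1
  have hsub : ∀ {c d : ℝ}, c ∈ Set.Icc (-π) π → d ∈ Set.Icc (-π) π →
      IntervalIntegrable φ volume c d := fun hc hd =>
    hφint.mono_set (Set.uIcc_subset_uIcc (mem_uIcc_pi hc) (mem_uIcc_pi hd))
  have hnonneg : ∀ {c d : ℝ}, c ∈ Set.Icc (-π) π → d ∈ Set.Icc (-π) π → c ≤ d →
      0 ≤ ∫ k2 in c..d, φ k2 := by
    intro c d hcm hdm hcd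
    apply intervalIntegral.integral_nonneg_of_ae_restrict hcd
    filter_upwards [ae_restrict_of_ae ae_ne_zero,
      ae_restrict_mem measurableSet_Icc] with k2 hk20 hk2m
    have hk2' : |k2| ≤ π := abs_le.mpr ⟨by linarith [hk2m.1, hcm.1], by linarith [hk2m.2, hdm.2]⟩
    have hg2 : 0 < gOC k2 := gOC_pos hk2' hk20
    have := log_concave_ineq hg1 hg2 hu.le hv.le (by linarith)
    simp only [hφ, Pi.zero_apply, sub_nonneg]
    exact this
  have hpos : 0 < ∫ k2 in (0:ℝ)..(π/2), φ k2 := by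
    apply intervalIntegral_pos_of_pos_on (hsub zero_mem half_pi_mem)
    · intro k2 hk2
      have hk2' : |k2| ≤ π := abs_le.mpr ⟨by linarith [hk2.1], by linarith [hk2.2]⟩
      have hg2 : 0 < gOC k2 := gOC_pos hk2' (ne_of_gt hk2.1)
      have hg2lt : gOC k2 < 2 := by
        have := Real.cos_lt_cos_of_nonneg_of_le_pi hk2.1.le (by linarith) hk2.2
        rw [Real.cos_pi_div_two] at this
        unfold gOC; linarith
      have := log_concave_strict hg1 hg2 (by linarith) hu hv (by linarith)
      simp only [hφ, sub_pos]
      exact this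
    · linarith
  have e1 := intervalIntegral.integral_add_adjacent_intervals
    (hsub neg_pi_mem zero_mem) (hsub zero_mem half_pi_mem)
  have e2 := intervalIntegral.integral_add_adjacent_intervals
    (hsub neg_pi_mem half_pi_mem) (hsub half_pi_mem pi_mem)
  have h1 := hnonneg neg_pi_mem zero_mem (by linarith)
  have h3 := hnonneg half_pi_mem pi_mem (by linarith)
  have htot : 0 < ∫ k2 in (-π)..π, φ k2 := by linarith
  have hsubint := intervalIntegral.integral_sub hInt2 hInt1
  rw [show (fun k2 => Real.log (v * gOC k1 + u * gOC k2)
      - (v * Real.log (gOC k1) + u * Real.log (gOC k2))) = φ from rfl] at hsubint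
  rw [hsubint] at htot
  rw [rhs_integral] at htot
  unfold innerF
  linarith

lemma log_le_log4 {t : ℝ} (h0 : 0 ≤ t) (h4 : t ≤ 4) : Real.log t ≤ Real.log 4 := by
  rcases eq_or_lt_of_le h0 with h | h
  · rw [← h, Real.log_zero]
    exact Real.log_nonneg (by norm_num)
  · exact Real.log_le_log h h4

lemma inner_le {u v : ℝ} (hu : 0 < u) (hv : 0 < v) (huv : u + v = 1) {k1 : ℝ}
    (hk1 : |k1| ≤ π) (h0 : k1 ≠ 0) : innerF v u k1 ≤ 2*π*Real.log 4 := by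
  have hg1 : 0 < gOC k1 := gOC_pos hk1 h0
  have hc : 0 < v * gOC k1 := by positivity
  have hInt2 : IntervalIntegrable
      (fun k2 => Real.log (v * gOC k1 + u * gOC k2)) volume (-π) π :=
    (cont_inner hc hu.le).intervalIntegrable _ _
  have hmono := intervalIntegral.integral_mono_on
    (by linarith [Real.pi_pos] : -π ≤ π) hInt2
    (_root_.intervalIntegrable_const (c := Real.log 4)) ?_
  · rw [intervalIntegral.integral_const, smul_eq_mul] at hmono
    unfold innerF
    calc (∫ k2 in (-π)..π, Real.log (v * gOC k1 + u * gOC k2))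
        ≤ (π - -π) * Real.log 4 := hmono
      _ = 2*π*Real.log 4 := by ring
  · intro k2 _
    apply log_le_log4
      (by nlinarith [gOC_nonneg k1, gOC_nonneg k2] :
        (0:ℝ) ≤ v * gOC k1 + u * gOC k2)
    nlinarith [gOC_le_four k1, gOC_le_four k2, gOC_nonneg k1, gOC_nonneg k2]

lemma inner_ge_lb {u v : ℝ} (hu : 0 < u) (hv : 0 < v) (huv : u + v = 1) {k1 : ℝ}
    (hk1 : |k1| ≤ π) (h0 : k1 ≠ 0) :
    2*π*Real.log u + COC ≤ innerF v u k1 := by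
  have hg1 : 0 < gOC k1 := gOC_pos hk1 h0
  have hc : 0 < v * gOC k1 := by positivity
  have hInt1 : IntervalIntegrable
      (fun k2 => Real.log u + Real.log (gOC k2)) volume (-π) π :=
    intervalIntegrable_const.add (intInt_log_gOC (uIcc_sub neg_pi_mem pi_mem))
  have hInt2 : IntervalIntegrable
      (fun k2 => Real.log (v * gOC k1 + u * gOC k2)) volume (-π) π :=
    (cont_inner hc hu.le).intervalIntegrable _ _
  have hmono := intervalIntegral.integral_mono_ae_restrict
    (by linarith [Real.pi_pos] : -π ≤ π) hInt1 hInt2 ?_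
  · rw [intervalIntegral.integral_add intervalIntegrable_const
      (intInt_log_gOC (uIcc_sub neg_pi_mem pi_mem)),
      intervalIntegral.integral_const, smul_eq_mul] at hmono
    unfold innerF
    rw [show COC = ∫ k in (-π)..π, Real.log (gOC k) from rfl]
    calc 2*π*Real.log u + (∫ k in (-π)..π, Real.log (gOC k))
        = (π - -π) * Real.log u + ∫ k in (-π)..π, Real.log (gOC k) := by ring
      _ ≤ _ := hmono
  · filter_upwards [ae_restrict_of_ae ae_ne_zero,
      ae_restrict_mem measurableSet_Icc] with k2 hk20 hk2m
    have hg2 : 0 < gOC k2 := gOC_pos (abs_le.mpr ⟨hk2m.1, hk2m.2⟩) hk20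
    have h1 : Real.log u + Real.log (gOC k2) = Real.log (u * gOC k2) :=
      (Real.log_mul hu.ne' hg2.ne').symm
    rw [h1]
    apply Real.log_le_log (by positivity)
    nlinarith

lemma meas_innerF (v u : ℝ) : StronglyMeasurable (innerF v u) := by
  have h : StronglyMeasurable
      (Function.uncurry (fun k1 k2 : ℝ => Real.log (v * gOC k1 + u * gOC k2))) := by
    apply Measurable.stronglyMeasurable
    apply Real.measurable_log.comp
    have : Continuous (fun p : ℝ × ℝ => v * gOC p.1 + u * gOC p.2) := by
      have := continuous_gOC
      fun_prop
    exact this.measurable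
  have h2 := h.integral_prod_right (ν := volume.restrict (Set.Ioc (-π) π))
  have : innerF v u = fun k1 => ∫ k2, Real.log (v * gOC k1 + u * gOC k2)
      ∂(volume.restrict (Set.Ioc (-π) π)) := by
    funext k1
    rw [innerF, intervalIntegral.integral_of_le (by linarith [Real.pi_pos])]
  rw [this]
  exact h2

lemma intInt_innerF {u v : ℝ} (hu : 0 < u) (hv : 0 < v) (huv : u + v = 1) :
    IntervalIntegrable (innerF v u) volume (-π) π := by
  rw [intervalIntegrable_iff]
  set M := |2*π*Real.log u + COC| + |2*π*Real.log 4| with hM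
  have hconst : IntegrableOn (fun _ : ℝ => M) (Set.uIoc (-π) π) volume := by
    rw [Set.uIoc_of_le (by linarith [Real.pi_pos] : -π ≤ π)]
    exact integrableOn_const measure_Ioc_lt_top.ne
  apply Integrable.mono' hconst ((meas_innerF v u).aestronglyMeasurable)
  filter_upwards [ae_restrict_of_ae ae_ne_zero,
    ae_restrict_mem measurableSet_uIoc] with k1 h0 hm
  have hk1 : |k1| ≤ π := by
    have := Set.uIoc_subset_uIcc hm
    rw [Set.uIcc_of_le (by linarith [Real.pi_pos] : -π ≤ π), Set.mem_Icc] at this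
    exact abs_le.mpr this
  have h1 := inner_le hu hv huv hk1 h0
  have h2 := inner_ge_lb hu hv huv hk1 h0
  simp only [Real.norm_eq_abs]
  show |innerF v u k1| ≤ M
  rw [abs_le]
  constructor
  · have := neg_abs_le (2*π*Real.log u + COC)
    have := abs_nonneg (2*π*Real.log 4)
    linarith
  · have := le_abs_self (2*π*Real.log 4)
    have := abs_nonneg (2*π*Real.log u + COC)
    linarith

lemma outer_gt {u v : ℝ} (hu : 0 < u) (hv : 0 < v) (huv : u + v = 1) :
    2*π*COC < ∫ k1 in (-π)..π, innerF v u k1 := by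
  have hpi := Real.pi_pos
  set F2 : ℝ → ℝ := fun k1 => 2*π*(v * Real.log (gOC k1)) + u * COC with hF2
  have hLint := intInt_log_gOC (uIcc_sub neg_pi_mem pi_mem)
  have hF2int : IntervalIntegrable F2 volume (-π) π :=
    (((hLint.const_mul v).const_mul (2*π)).add _root_.intervalIntegrable_const)
  have hF2val : (∫ k1 in (-π)..π, F2 k1) = 2*π*COC := by
    rw [hF2]
    rw [intervalIntegral.integral_add ((hLint.const_mul v).const_mul (2*π))
      _root_.intervalIntegrable_const,
      intervalIntegral.integral_const_mul, intervalIntegral.integral_const_mul,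
      intervalIntegral.integral_const, smul_eq_mul]
    rw [show (∫ k in (-π)..π, Real.log (gOC k)) = COC from rfl]
    linear_combination (2*π*COC) * huv
  have hFint := intInt_innerF hu hv huv
  set ψ : ℝ → ℝ := fun k1 => innerF v u k1 - F2 k1 with hψ
  have hψint : IntervalIntegrable ψ volume (-π) π := hFint.sub hF2int
  have hsub : ∀ {c d : ℝ}, c ∈ Set.Icc (-π) π → d ∈ Set.Icc (-π) π →
      IntervalIntegrable ψ volume c d := fun hc hd =>
    hψint.mono_set (Set.uIcc_subset_uIcc (mem_uIcc_pi hc) (mem_uIcc_pi hd))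
  have h1 : 0 ≤ ∫ k1 in (-π)..(π/2), ψ k1 := by
    apply intervalIntegral.integral_nonneg_of_ae_restrict (by linarith)
    filter_upwards [ae_restrict_of_ae ae_ne_zero,
      ae_restrict_mem measurableSet_Icc] with k1 hk10 hk1m
    have hk1 : |k1| ≤ π := abs_le.mpr ⟨hk1m.1, by linarith [hk1m.2]⟩
    have := inner_ge hu hv huv hk1 hk10
    simp only [hψ, Pi.zero_apply, sub_nonneg]
    exact this
  have h2 : 0 < ∫ k1 in (π/2)..π, ψ k1 := by
    apply intervalIntegral_pos_of_pos_on (hsub half_pi_mem pi_mem)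
    · intro k1 hk1
      have := inner_gt hu hv huv hk1
      simp only [hψ, sub_pos]
      exact this
    · linarith
  have e1 := intervalIntegral.integral_add_adjacent_intervals
    (hsub neg_pi_mem half_pi_mem) (hsub half_pi_mem pi_mem)
  have htot : 0 < ∫ k1 in (-π)..π, ψ k1 := by linarith
  rw [hψ] at htot
  rw [intervalIntegral.integral_sub hFint hF2int, hF2val] at htot
  linarith

lemma spinWaveF_eq (wx wz : ℝ) : spinWaveF wx wz
    = (1/2) * (1/(2*π)^2) * ∫ k1 in (-π)..π, ∫ k2 in (-π)..π,
        Real.log (wz^2 * gOC k1 + wx^2 * gOC k2) := by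
  unfold spinWaveF
  simp only [gOC_eq]

lemma spinWaveF_axis : spinWaveF 1 0 = (1/2) * (1/(2*π)^2) * (2*π*COC) := by
  rw [spinWaveF_eq]
  have h2 : (∫ k1 in (-π)..π, ∫ k2 in (-π)..π,
      Real.log ((0:ℝ)^2 * gOC k1 + 1^2 * gOC k2)) = 2*π*COC := by
    have h1 : (∫ k1 in (-π)..π, ∫ k2 in (-π)..π,
        Real.log ((0:ℝ)^2 * gOC k1 + 1^2 * gOC k2))
        = ∫ k1 in (-π)..π, COC := by
      apply intervalIntegral.integral_congr
      intro k1 _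
      rw [COC]
      norm_num
    rw [h1, intervalIntegral.integral_const, smul_eq_mul]
    ring
  rw [h2]

/-- The spin-wave free energy `F` is minimized, over unit vectors `ŵ` in the `xz`-plane,
only by `ŵ = ±ê_x` and `ŵ = ±ê_z`. -/
theorem spinWaveF_minimized_only_on_axes (wx wz : ℝ) (h : wx ^ 2 + wz ^ 2 = 1) :
    spinWaveF 1 0 ≤ spinWaveF wx wz
      ∧ (spinWaveF wx wz = spinWaveF 1 0 ↔ wx = 0 ∨ wz = 0) := by
  have hpi := Real.pi_pos
  have hκ : (0:ℝ) < (1/2) * (1/(2*π)^2) := by positivity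
  have hax : ∀ wx' wz' : ℝ, (wx' = 0 ∨ wz' = 0) → wx' ^ 2 + wz' ^ 2 = 1 →
      spinWaveF wx' wz' = spinWaveF 1 0 := by
    rintro wx' wz' (h0 | h0) h1 <;> subst h0
    · -- wx' = 0, wz'^2 = 1
      have hwz2 : wz' ^ 2 = 1 := by linarith [h1]
      rw [spinWaveF_eq, spinWaveF_axis, hwz2]
      have h1' : (∫ k1 in (-π)..π, ∫ k2 in (-π)..π,
          Real.log (1 * gOC k1 + (0:ℝ)^2 * gOC k2))
          = ∫ k1 in (-π)..π, (π - -π) • Real.log (gOC k1) := by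
        apply intervalIntegral.integral_congr
        intro k1 _
        norm_num
      rw [h1', intervalIntegral.integral_smul, smul_eq_mul]
      rw [show (∫ k in (-π)..π, Real.log (gOC k)) = COC from rfl]
      ring
    · -- wz' = 0, wx'^2 = 1
      have hwx2 : wx' ^ 2 = 1 := by linarith [h1]
      rw [spinWaveF_eq, spinWaveF_axis, hwx2]
      have h1' : (∫ k1 in (-π)..π, ∫ k2 in (-π)..π,
          Real.log ((0:ℝ)^2 * gOC k1 + 1 * gOC k2))
          = ∫ k1 in (-π)..π, COC := by
        apply intervalIntegral.integral_congr
        intro k1 _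
        rw [COC]
        norm_num
      rw [h1', intervalIntegral.integral_const, smul_eq_mul]
      ring
  have hstrict : wx ≠ 0 → wz ≠ 0 → spinWaveF 1 0 < spinWaveF wx wz := by
    intro hwx hwz
    have hu : 0 < wx ^ 2 := by positivity
    have hv : 0 < wz ^ 2 := by positivity
    have hgt := outer_gt hu hv h
    have heq : spinWaveF wx wz = (1/2) * (1/(2*π)^2)
        * ∫ k1 in (-π)..π, innerF (wz^2) (wx^2) k1 := by
      rw [spinWaveF_eq]
      rfl
    rw [heq, spinWaveF_axis]
    exact (mul_lt_mul_iff_right₀ hκ).mpr hgt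
  constructor
  · by_cases hwx : wx = 0
    · exact (hax wx wz (Or.inl hwx) h).ge
    · by_cases hwz : wz = 0
      · exact (hax wx wz (Or.inr hwz) h).ge
      · exact (hstrict hwx hwz).le
  · constructor
    · intro heq
      by_contra hne
      push_neg at hne
      exact absurd heq.symm (ne_of_lt (hstrict hne.1 hne.2))
    · intro h0
      exact hax wx wz h0 h
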